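/- Let h : Q → P be a surjective homomorphism of commutative monoids with P finitely generated, and suppose h is strict: whenever h(q₁) = h(q₂) + u for some additive unit u of P, there is an additive unit v of Q with q₁ = q₂ + v. Then there exists a finitely generated submonoid S ⊆ Q such that the restriction h|S : S → P is surjective and strict, i.e., whenever s₁, s₂ ∈ S satisfy h(s₁) = h(s₂) + u for an additive unit u of P, there exists v ∈ S with −v ∈ S (an additive unit of the monoid S) such that s₁ = s₂ + v. -/

import Mathlib

set_option maxHeartbeats 1000000

/-- A Rédei-style lemma: for any set `CS` of pairs in the free commutative monoid `σ →₀ ℕ`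
(`σ` finite), there is a finite subset `F ⊆ CS` such that every additive congruence
containing `F` contains `CS`.  Proved via the Hilbert basis theorem for `MvPolynomial σ ℚ`
and monoid algebras. -/
lemma aux_redei {σ : Type*} [Fintype σ] (CS : Set ((σ →₀ ℕ) × (σ →₀ ℕ))) :
    ∃ F : Set ((σ →₀ ℕ) × (σ →₀ ℕ)), F ⊆ CS ∧ F.Finite ∧
      ∀ c : AddCon (σ →₀ ℕ), (∀ p ∈ F, c p.1 p.2) → ∀ p ∈ CS, c p.1 p.2 := by
  classical
  let bin : (σ →₀ ℕ) × (σ →₀ ℕ) → AddMonoidAlgebra ℚ (σ →₀ ℕ) :=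
    fun p => AddMonoidAlgebra.single p.1 (1 : ℚ) - AddMonoidAlgebra.single p.2 1
  haveI : IsNoetherianRing (AddMonoidAlgebra ℚ (σ →₀ ℕ)) :=
    inferInstanceAs (IsNoetherianRing (MvPolynomial σ ℚ))
  obtain ⟨G0, hG0⟩ := IsNoetherian.noetherian (Ideal.span (bin '' CS))
  choose T hTsub hTmem using fun x : G0 =>
    Submodule.mem_span_finite_of_mem_span
      (show (x : AddMonoidAlgebra ℚ (σ →₀ ℕ)) ∈ Ideal.span (bin '' CS) by
        rw [← hG0]; exact Submodule.subset_span (Finset.mem_coe.2 x.2))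
  set tF : Finset (AddMonoidAlgebra ℚ (σ →₀ ℕ)) := G0.attach.biUnion (fun x => T x) with htF
  have htUsub : ↑tF ⊆ bin '' CS := by
    intro x hx
    rw [Finset.mem_coe, htF, Finset.mem_biUnion] at hx
    obtain ⟨y, -, hy⟩ := hx
    exact hTsub y hy
  have hspan_le : Ideal.span (bin '' CS) ≤ Ideal.span ↑tF := by
    rw [← hG0, Submodule.span_le]
    intro x hx
    have hsub : (T ⟨x, hx⟩ : Set (AddMonoidAlgebra ℚ (σ →₀ ℕ))) ⊆ ↑tF := by
      intro z hz
      rw [Finset.mem_coe, htF, Finset.mem_biUnion]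
      exact ⟨⟨x, hx⟩, Finset.mem_attach _ _, hz⟩
    exact Submodule.span_mono hsub (hTmem ⟨x, hx⟩)
  have choice2 : ∀ x ∈ (tF : Set (AddMonoidAlgebra ℚ (σ →₀ ℕ))), ∃ p, p ∈ CS ∧ bin p = x :=
    fun x hx => by obtain ⟨p, hp, he⟩ := htUsub hx; exact ⟨p, hp, he⟩
  choose! fp hfp1 hfp2 using choice2
  refine ⟨fp '' ↑tF, ?_, (tF.finite_toSet).image _, ?_⟩
  · rintro p ⟨x, hx, rfl⟩; exact hfp1 x hx
  · intro c hc p hp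
    have hker : Ideal.span (bin '' (fp '' ↑tF)) ≤
        RingHom.ker (AddMonoidAlgebra.mapDomainRingHom ℚ c.mk') := by
      rw [Ideal.span_le]
      rintro x ⟨q, hq, rfl⟩
      rw [SetLike.mem_coe, RingHom.mem_ker]
      have hmk : ((q.1 : c.Quotient)) = (q.2 : c.Quotient) := c.eq.2 (hc q hq)
      show AddMonoidAlgebra.mapDomainRingHom ℚ c.mk'
        (AddMonoidAlgebra.single q.1 (1 : ℚ) - AddMonoidAlgebra.single q.2 1) = 0
      rw [map_sub]
      show AddMonoidAlgebra.mapDomain c.mk' (AddMonoidAlgebra.single q.1 (1 : ℚ)) -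
        AddMonoidAlgebra.mapDomain c.mk' (AddMonoidAlgebra.single q.2 (1 : ℚ)) = 0
      rw [AddMonoidAlgebra.mapDomain_single, AddMonoidAlgebra.mapDomain_single, AddCon.coe_mk', hmk, sub_self]
    have hbp : bin p ∈ Ideal.span (bin '' (fp '' ↑tF)) := by
      have h1 : bin p ∈ Ideal.span (bin '' CS) := Ideal.subset_span ⟨p, hp, rfl⟩
      have h2 : (tF : Set (AddMonoidAlgebra ℚ (σ →₀ ℕ))) ⊆ bin '' (fp '' ↑tF) :=
        fun x hx => ⟨fp x, ⟨x, hx, rfl⟩, hfp2 x hx⟩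
      exact Ideal.span_mono h2 (hspan_le h1)
    have h0 : AddMonoidAlgebra.mapDomainRingHom ℚ c.mk'
        (AddMonoidAlgebra.single p.1 (1 : ℚ) - AddMonoidAlgebra.single p.2 1) = 0 := hker hbp
    rw [map_sub, sub_eq_zero] at h0
    replace h0 : AddMonoidAlgebra.mapDomain c.mk' (AddMonoidAlgebra.single p.1 (1 : ℚ)) =
        AddMonoidAlgebra.mapDomain c.mk' (AddMonoidAlgebra.single p.2 (1 : ℚ)) := h0
    rw [AddMonoidAlgebra.mapDomain_single, AddMonoidAlgebra.mapDomain_single] at h0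
    rcases AddMonoidAlgebra.single_inj.1 h0 with ⟨h1, _⟩ | ⟨h1, _⟩
    · rw [AddCon.coe_mk'] at h1; exact c.eq.1 h1
    · exact absurd h1 one_ne_zero

/-- Let `h : Q → P` be a strict, surjective homomorphism of commutative monoids with `P`
finitely generated.  Then there is a finitely generated submonoid `S ⊆ Q` such that
`h|S : S → P` is surjective and strict: whenever `s₁, s₂ ∈ S` satisfy `h s₁ = h s₂ + u`
for an additive unit `u` of `P`, there is an additive unit `v` of the monoid `S`
(i.e. `v ∈ S` with an additive inverse in `S`) such that `s₁ = s₂ + v`. -/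
theorem strict_surjection_restricts_to_finitely_generated
    (Q P : Type*) [AddCommMonoid Q] [AddCommMonoid P]
    (hPfg : AddMonoid.FG P)
    (h : Q →+ P) (hsurj : Function.Surjective h)
    (hstrict : ∀ q₁ q₂ : Q, ∀ u : P, IsAddUnit u → h q₁ = h q₂ + u →
      ∃ v : Q, IsAddUnit v ∧ q₁ = q₂ + v) :
    ∃ S : AddSubmonoid Q, S.FG ∧ (∀ p : P, ∃ s ∈ S, h s = p) ∧
      (∀ s₁ ∈ S, ∀ s₂ ∈ S, ∀ u : P, IsAddUnit u → h s₁ = h s₂ + u →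
        ∃ v ∈ S, (∃ w ∈ S, v + w = 0) ∧ s₁ = s₂ + v) := by
  classical
  obtain ⟨Sp, hSp⟩ := hPfg.fg_top
  set g : P → Q := Function.surjInv hsurj with hgdef
  have hgs : ∀ p, h (g p) = p := Function.surjInv_eq hsurj
  haveI : Fintype {x : P // x ∈ Sp} := FinsetCoe.fintype Sp
  set π : ({x : P // x ∈ Sp} →₀ ℕ) →+ Q :=
    Finsupp.liftAddHom fun i => multiplesHom Q (g i.1) with hπdef
  have hπsingle : ∀ i : {x : P // x ∈ Sp}, π (Finsupp.single i 1) = g i.1 := by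
    intro i
    rw [hπdef, Finsupp.liftAddHom_apply_single, multiplesHom_apply, one_nsmul]
  obtain ⟨F, hFCS, hFfin, hFgen⟩ := aux_redei
    {p : ({x : P // x ∈ Sp} →₀ ℕ) × ({x : P // x ∈ Sp} →₀ ℕ) |
      ∃ u : P, IsAddUnit u ∧ h (π p.1) = h (π p.2) + u}
  have hchoice : ∀ p ∈ F, ∃ v : Q, IsAddUnit v ∧ π p.1 = π p.2 + v := by
    intro p hp
    obtain ⟨u, hu, he⟩ := hFCS hp
    exact hstrict _ _ u hu he
  choose! vf hvf1 hvf2 using hchoice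
  have hchoice2 : ∀ p ∈ F, ∃ w : Q, vf p + w = 0 := by
    intro p hp
    obtain ⟨b, hb, -⟩ := isAddUnit_iff_exists.1 (hvf1 p hp)
    exact ⟨b, hb⟩
  choose! wf hwf using hchoice2
  set Vset : Set Q := vf '' F ∪ wf '' F with hVset
  set qSet : Set Q := g '' ↑Sp with hqSet
  -- every element of the closure of `Vset` has an inverse there
  have hVinv : ∀ x ∈ AddSubmonoid.closure Vset, ∃ y ∈ AddSubmonoid.closure Vset, x + y = 0 := by
    intro x hx
    induction hx using AddSubmonoid.closure_induction with
    | mem z hz =>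
      rcases hz with ⟨p, hp, rfl⟩ | ⟨p, hp, rfl⟩
      · exact ⟨wf p, AddSubmonoid.subset_closure (Or.inr ⟨p, hp, rfl⟩), hwf p hp⟩
      · exact ⟨vf p, AddSubmonoid.subset_closure (Or.inl ⟨p, hp, rfl⟩),
          by rw [add_comm]; exact hwf p hp⟩
    | zero => exact ⟨0, zero_mem _, add_zero 0⟩
    | add x y hx hy ihx ihy =>
      obtain ⟨x', hx', hxx⟩ := ihx
      obtain ⟨y', hy', hyy⟩ := ihy
      exact ⟨x' + y', add_mem hx' hy', by rw [add_add_add_comm, hxx, hyy, add_zero]⟩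
  have hTle : AddSubmonoid.closure qSet ≤ AddMonoidHom.mrange π := by
    rw [AddSubmonoid.closure_le]
    rintro x ⟨p0, hp0, rfl⟩
    exact ⟨Finsupp.single ⟨p0, hp0⟩ 1, hπsingle ⟨p0, hp0⟩⟩
  refine ⟨AddSubmonoid.closure (qSet ∪ Vset), ?_, ?_, ?_⟩
  · exact (AddSubmonoid.fg_iff _).2 ⟨qSet ∪ Vset, rfl,
      (Sp.finite_toSet.image g).union ((hFfin.image vf).union (hFfin.image wf))⟩
  · intro p
    have hp : p ∈ AddSubmonoid.closure (↑Sp : Set P) := by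
      rw [hSp]; exact AddSubmonoid.mem_top p
    induction hp using AddSubmonoid.closure_induction with
    | mem x hx => exact ⟨g x, AddSubmonoid.subset_closure (Or.inl ⟨x, hx, rfl⟩), hgs x⟩
    | zero => exact ⟨0, zero_mem _, map_zero h⟩
    | add x y hx hy ihx ihy =>
      obtain ⟨s, hs, rfl⟩ := ihx
      obtain ⟨t, ht, rfl⟩ := ihy
      exact ⟨s + t, add_mem hs ht, map_add h s t⟩
  · intro s₁ hs₁ s₂ hs₂ u hu hequ
    rw [AddSubmonoid.closure_union] at hs₁ hs₂
    obtain ⟨t₁, ht₁, g₁, hg₁, rfl⟩ := AddSubmonoid.mem_sup.1 hs₁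
    obtain ⟨t₂, ht₂, g₂, hg₂, rfl⟩ := AddSubmonoid.mem_sup.1 hs₂
    obtain ⟨a, ha⟩ := hTle ht₁
    obtain ⟨b, hb⟩ := hTle ht₂
    obtain ⟨g₁', hg₁', hg₁inv⟩ := hVinv g₁ hg₁
    obtain ⟨g₂', hg₂', hg₂inv⟩ := hVinv g₂ hg₂
    have hug : ∀ x y : Q, x + y = 0 → IsAddUnit (h x) := fun x y hxy =>
      isAddUnit_iff_exists.2 ⟨h y, by rw [← map_add, hxy, map_zero],
        by rw [← map_add, add_comm, hxy, map_zero]⟩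
    have e1 := hequ
    rw [map_add, map_add] at e1
    have habCS : (a, b) ∈ {p : ({x : P // x ∈ Sp} →₀ ℕ) × ({x : P // x ∈ Sp} →₀ ℕ) |
        ∃ u : P, IsAddUnit u ∧ h (π p.1) = h (π p.2) + u} := by
      refine ⟨h g₂ + u + h g₁', ((hug g₂ g₂' hg₂inv).add hu).add
        (hug g₁' g₁ (by rw [add_comm]; exact hg₁inv)), ?_⟩
      show h (π a) = h (π b) + (h g₂ + u + h g₁')
      rw [ha, hb]
      have e2 : h t₂ + (h g₂ + u + h g₁') = (h t₁ + h g₁) + h g₁' := by rw [e1]; abel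
      rw [← add_assoc, add_assoc (h t₂), e2, add_assoc, ← map_add, hg₁inv, map_zero, add_zero]
    -- the congruence defined by unit differences in the closure of `Vset`
    have crefl : ∀ a : {x : P // x ∈ Sp} →₀ ℕ, ∃ x ∈ AddSubmonoid.closure Vset, π a = π a + x :=
      fun a => ⟨0, zero_mem _, (add_zero _).symm⟩
    have csymm : ∀ {a b}, (∃ x ∈ AddSubmonoid.closure Vset, π a = π b + x) →
        ∃ x ∈ AddSubmonoid.closure Vset, π b = π a + x := by
      rintro a b ⟨x, hx, he⟩
      obtain ⟨y, hy, hxy⟩ := hVinv x hx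
      exact ⟨y, hy, by rw [he, add_assoc, hxy, add_zero]⟩
    have ctrans : ∀ {a b c'}, (∃ x ∈ AddSubmonoid.closure Vset, π a = π b + x) →
        (∃ x ∈ AddSubmonoid.closure Vset, π b = π c' + x) →
        ∃ x ∈ AddSubmonoid.closure Vset, π a = π c' + x := by
      rintro a b c' ⟨x, hx, he⟩ ⟨y, hy, he'⟩
      exact ⟨y + x, add_mem hy hx, by rw [he, he', add_assoc]⟩
    have cadd : ∀ {w x y z}, (∃ t ∈ AddSubmonoid.closure Vset, π w = π x + t) →
        (∃ t ∈ AddSubmonoid.closure Vset, π y = π z + t) →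
        ∃ t ∈ AddSubmonoid.closure Vset, π (w + y) = π (x + z) + t := by
      rintro w x y z ⟨s, hs, he⟩ ⟨t, ht, he'⟩
      exact ⟨s + t, add_mem hs ht, by rw [map_add, map_add, he, he', add_add_add_comm]⟩
    let c : AddCon ({x : P // x ∈ Sp} →₀ ℕ) :=
      ⟨⟨fun a b => ∃ x ∈ AddSubmonoid.closure Vset, π a = π b + x,
        ⟨crefl, fun hab => csymm hab, fun hab hbc => ctrans hab hbc⟩⟩,
        fun hab hcd => cadd hab hcd⟩
    have hcF : ∀ p ∈ F, c p.1 p.2 := fun p hp =>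
      ⟨vf p, AddSubmonoid.subset_closure (Or.inl ⟨p, hp, rfl⟩), hvf2 p hp⟩
    have hab : ∃ x ∈ AddSubmonoid.closure Vset, π a = π b + x := hFgen c hcF (a, b) habCS
    obtain ⟨x, hx, hxe⟩ := hab
    have ht : t₁ = t₂ + x := by rw [← ha, ← hb]; exact hxe
    have hVS : AddSubmonoid.closure Vset ≤ AddSubmonoid.closure (qSet ∪ Vset) :=
      AddSubmonoid.closure_mono Set.subset_union_right
    refine ⟨x + g₁ + g₂', hVS (add_mem (add_mem hx hg₁) hg₂'), ?_, ?_⟩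
    · obtain ⟨y, hy, hvy⟩ := hVinv _ (add_mem (add_mem hx hg₁) hg₂')
      exact ⟨y, hVS hy, hvy⟩
    · calc t₁ + g₁ = t₂ + x + g₁ + 0 := by rw [ht, add_zero]
        _ = t₂ + x + g₁ + (g₂ + g₂') := by rw [hg₂inv]
        _ = t₂ + g₂ + (x + g₁ + g₂') := by abel
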